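/- Let (X, Σ) be a measurable space, let μ and ν be probability measures on X, and let f : X → ℂ be a measurable function that is square-integrable with respect to both μ and ν. Suppose ∫ |f|² dν ≤ 1, let m = ∫ f dμ with |m| > 0, and let K = ∫ |f − m|² dμ. Then the measurable set A = { x : |f(x)| ≥ |m|/2 } satisfies μ(A) − ν(A) ≥ 1 − 4(K+1)/|m|²; in particular the total variation distance satisfies d_TV(μ, ν) = sup_{B ∈ Σ} |μ(B) − ν(B)| ≥ 1 − 4(K+1)/|m|². -/

import Mathlib

open MeasureTheory

/-- Total variation distance between two measures:
`d_TV(μ, ν) = sup { |μ(A) - ν(A)| : A measurable }`. -/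
noncomputable def tvDist {X : Type*} [MeasurableSpace X] (μ ν : Measure X) : ℝ :=
  ⨆ A : { s : Set X // MeasurableSet s }, |(μ A.1).toReal - (ν A.1).toReal|

/-- Let `μ, ν` be probability measures, `f` measurable and square-integrable for both, with
`∫|f|²dν ≤ 1`, `m = ∫ f dμ`, `|m| > 0` and `K = ∫|f - m|²dμ`. Then the set
`A = {|f| ≥ |m|/2}` satisfies `μ(A) - ν(A) ≥ 1 - 4(K+1)/|m|²`, and in particular
`d_TV(μ, ν) ≥ 1 - 4(K+1)/|m|²`. -/
theorem statement14 {X : Type*} [MeasurableSpace X] (μ ν : Measure X)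
    [IsProbabilityMeasure μ] [IsProbabilityMeasure ν] (f : X → ℂ) (hf : Measurable f)
    (hfμ : MemLp f 2 μ) (hfν : MemLp f 2 ν)
    (hν1 : ∫ x, ‖f x‖ ^ 2 ∂ν ≤ 1) (m : ℂ) (hm : m = ∫ x, f x ∂μ) (hm0 : 0 < ‖m‖)
    (K : ℝ) (hK : K = ∫ x, ‖f x - m‖ ^ 2 ∂μ) :
    (1 - 4 * (K + 1) / ‖m‖ ^ 2 ≤
        (μ {x | ‖m‖ / 2 ≤ ‖f x‖}).toReal - (ν {x | ‖m‖ / 2 ≤ ‖f x‖}).toReal) ∧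
      1 - 4 * (K + 1) / ‖m‖ ^ 2 ≤ tvDist μ ν := by
  set A : Set X := {x | ‖m‖ / 2 ≤ ‖f x‖} with hA_def
  have hA : MeasurableSet A := measurableSet_le measurable_const hf.norm
  have hc : (0:ℝ) < (‖m‖ / 2) ^ 2 := by positivity
  -- integrability of norms squared
  have hintν : Integrable (fun x => ‖f x‖ ^ 2) ν := by
    have := hfν.integrable_norm_rpow (by norm_num) (by norm_num)
    simpa [ENNReal.toReal_ofNat, Real.rpow_natCast] using this
  have hintμ : Integrable (fun x => ‖f x - m‖ ^ 2) μ := by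
    have h2 : MemLp (fun x => f x - m) 2 μ := hfμ.sub (memLp_const m)
    have := h2.integrable_norm_rpow (by norm_num) (by norm_num)
    simpa [ENNReal.toReal_ofNat, Real.rpow_natCast] using this
  -- ν bound (Chebyshev)
  have hνset : A = {x | (‖m‖ / 2) ^ 2 ≤ ‖f x‖ ^ 2} := by
    ext x
    simp only [hA_def, Set.mem_setOf_eq]
    constructor
    · intro h; exact pow_le_pow_left₀ (by positivity) h 2
    · intro h; nlinarith [norm_nonneg (f x), hm0]
  have hνbound : (‖m‖ / 2) ^ 2 * (ν A).toReal ≤ 1 := by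
    rw [hνset]
    calc (‖m‖ / 2) ^ 2 * (ν {x | (‖m‖ / 2) ^ 2 ≤ ‖f x‖ ^ 2}).toReal
        ≤ ∫ x, ‖f x‖ ^ 2 ∂ν :=
          mul_meas_ge_le_integral_of_nonneg
            (Filter.Eventually.of_forall fun x => by positivity) hintν _
      _ ≤ 1 := hν1
  -- μ bound (Chebyshev on the complement)
  have hsub : Aᶜ ⊆ {x | (‖m‖ / 2) ^ 2 ≤ ‖f x - m‖ ^ 2} := by
    intro x hx
    simp only [hA_def, Set.mem_compl_iff, Set.mem_setOf_eq, not_le] at hx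
    have h1 : ‖m‖ - ‖f x‖ ≤ ‖f x - m‖ := by
      rw [norm_sub_rev]; exact norm_sub_norm_le m (f x)
    have h2 : ‖m‖ / 2 ≤ ‖f x - m‖ := by linarith
    exact pow_le_pow_left₀ (by positivity) h2 2
  have hμcheb : (‖m‖ / 2) ^ 2 * (μ {x | (‖m‖ / 2) ^ 2 ≤ ‖f x - m‖ ^ 2}).toReal ≤ K := by
    rw [hK]
    exact mul_meas_ge_le_integral_of_nonneg
      (Filter.Eventually.of_forall fun x => by positivity) hintμ _
  have hμc : (μ Aᶜ).toReal ≤ (μ {x | (‖m‖ / 2) ^ 2 ≤ ‖f x - m‖ ^ 2}).toReal :=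
    ENNReal.toReal_mono (measure_ne_top _ _) (measure_mono hsub)
  have hμbound : (‖m‖ / 2) ^ 2 * (μ Aᶜ).toReal ≤ K := by nlinarith
  have hsplit : (μ A).toReal + (μ Aᶜ).toReal = 1 := by
    have h := measure_add_measure_compl (μ := μ) hA
    rw [measure_univ] at h
    have := ENNReal.toReal_add (measure_ne_top μ A) (measure_ne_top μ Aᶜ)
    rw [h] at this
    simpa using this.symm
  have hνnn : 0 ≤ (ν A).toReal := ENNReal.toReal_nonneg
  have hμcnn : 0 ≤ (μ Aᶜ).toReal := ENNReal.toReal_nonneg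
  have hm2 : (0:ℝ) < ‖m‖ ^ 2 := by positivity
  have e1 : (ν A).toReal ≤ 4 / ‖m‖ ^ 2 := by
    rw [le_div_iff₀ hm2]; nlinarith
  have e2 : (μ Aᶜ).toReal ≤ 4 * K / ‖m‖ ^ 2 := by
    rw [le_div_iff₀ hm2]; nlinarith
  have hmain : 1 - 4 * (K + 1) / ‖m‖ ^ 2 ≤ (μ A).toReal - (ν A).toReal := by
    have heq : 4 * (K + 1) / ‖m‖ ^ 2 = 4 * K / ‖m‖ ^ 2 + 4 / ‖m‖ ^ 2 := by ring
    linarith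
  refine ⟨hmain, le_trans hmain ?_⟩
  have hbdd : BddAbove (Set.range fun B : { s : Set X // MeasurableSet s } =>
      |(μ B.1).toReal - (ν B.1).toReal|) := by
    refine ⟨2, ?_⟩
    rintro _ ⟨B, rfl⟩
    have h1 : (μ B.1).toReal ≤ 1 := by
      simpa using ENNReal.toReal_mono (by norm_num) (prob_le_one (μ := μ) (s := B.1))
    have h2 : (ν B.1).toReal ≤ 1 := by
      simpa using ENNReal.toReal_mono (by norm_num) (prob_le_one (μ := ν) (s := B.1))
    have h3 : 0 ≤ (μ B.1).toReal := ENNReal.toReal_nonneg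
    have h4 : 0 ≤ (ν B.1).toReal := ENNReal.toReal_nonneg
    rw [abs_le]; constructor <;> linarith
  calc (μ A).toReal - (ν A).toReal ≤ |(μ A).toReal - (ν A).toReal| := le_abs_self _
    _ ≤ tvDist μ ν := le_ciSup hbdd ⟨A, hA⟩
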